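/- For every real x ≥ 2, ∑_{p ≤ x} 1/p ≤ log(log x) + 3 - log(log 2), where the sum runs over primes p ≤ x. -/

import Mathlib

open Finset Real

private noncomputable def AA (n : ℕ) : ℝ :=
  ∑ p ∈ (Finset.range (n + 1)).filter Nat.Prime, Real.log p / p

private lemma cheby (n : ℕ) :
    ∑ p ∈ (Finset.range (n + 1)).filter Nat.Prime, Real.log p ≤ n * Real.log 4 := by
  have h1 : ∑ p ∈ (Finset.range (n + 1)).filter Nat.Prime, Real.log p
      = Real.log (primorial n) := by
    rw [primorial, Nat.cast_prod, Real.log_prod]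
    intro p hp
    exact_mod_cast (Nat.Prime.pos (Finset.mem_filter.1 hp).2).ne'
  rw [h1]
  calc Real.log (primorial n) ≤ Real.log ((4 : ℕ) ^ n) := by
        apply Real.log_le_log (by exact_mod_cast primorial_pos n)
        exact_mod_cast primorial_le_4_pow n
    _ = n * Real.log 4 := by
        push_cast
        rw [Real.log_pow]

private lemma fact_div_le (n p : ℕ) (hp : p.Prime) (hn : n ≠ 0) :
    n / p ≤ ((Nat.factorial n)).factorization p := by
  rw [← (hp.pow_dvd_iff_le_factorization (Nat.factorial_ne_zero n))]
  rw [Nat.Prime.pow_dvd_factorial_iff hp (Nat.lt_succ_of_le (Nat.log_le_self p n))]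
  exact Finset.single_le_sum (f := fun i => n / p ^ i) (fun i _ => Nat.zero_le _)
    (Finset.mem_Ico.2 ⟨le_refl 1, by omega⟩) |>.trans_eq' (by rw [pow_one])

private lemma mertens (n : ℕ) (hn : 1 ≤ n) : AA n ≤ Real.log n + Real.log 4 := by
  have hn0 : (0 : ℝ) < n := by exact_mod_cast hn
  rw [← mul_le_mul_iff_right₀ hn0, mul_add, AA, Finset.mul_sum]
  have key : ∀ p ∈ (Finset.range (n + 1)).filter Nat.Prime,
      (n : ℝ) * (Real.log p / p) ≤ ((n / p : ℕ) : ℝ) * Real.log p + Real.log p := by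
    intro p hp
    obtain ⟨hpr, hpp⟩ := Finset.mem_filter.1 hp
    have hp0 : (0 : ℝ) < p := by exact_mod_cast hpp.pos
    have hlog : (0 : ℝ) ≤ Real.log p := Real.log_natCast_nonneg p
    have hdiv : (n : ℝ) / p ≤ ((n / p : ℕ) : ℝ) + 1 := by
      rw [div_le_iff₀ hp0]
      have : n < (n / p + 1) * p := (Nat.div_lt_iff_lt_mul hpp.pos).1 (Nat.lt_succ_self _)
      exact_mod_cast this.le
    calc (n : ℝ) * (Real.log p / p) = ((n : ℝ) / p) * Real.log p := by ring
      _ ≤ (((n / p : ℕ) : ℝ) + 1) * Real.log p := by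
          exact mul_le_mul_of_nonneg_right hdiv hlog
      _ = ((n / p : ℕ) : ℝ) * Real.log p + Real.log p := by ring
  refine (Finset.sum_le_sum key).trans ?_
  rw [Finset.sum_add_distrib]
  have h2 : ∑ p ∈ (Finset.range (n + 1)).filter Nat.Prime, ((n / p : ℕ) : ℝ) * Real.log p
      ≤ (n : ℝ) * Real.log n := by
    have hsub : (Finset.range (n + 1)).filter Nat.Prime ⊆ ((Nat.factorial n)).factorization.support := by
      intro p hp
      obtain ⟨hpr, hpp⟩ := Finset.mem_filter.1 hp
      rw [Nat.support_factorization, Nat.mem_primeFactors]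
      have hple : p ≤ n := Nat.lt_succ_iff.1 (Finset.mem_range.1 hpr)
      exact ⟨hpp, Nat.dvd_factorial hpp.pos hple, Nat.factorial_ne_zero n⟩
    calc ∑ p ∈ (Finset.range (n + 1)).filter Nat.Prime, ((n / p : ℕ) : ℝ) * Real.log p
        ≤ ∑ p ∈ (Finset.range (n + 1)).filter Nat.Prime,
            ((((Nat.factorial n)).factorization p : ℕ) : ℝ) * Real.log p := by
          apply Finset.sum_le_sum
          intro p hp
          obtain ⟨hpr, hpp⟩ := Finset.mem_filter.1 hp
          exact mul_le_mul_of_nonneg_right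
            (by exact_mod_cast fact_div_le n p hpp (by omega)) (Real.log_natCast_nonneg p)
      _ ≤ ∑ p ∈ ((Nat.factorial n)).factorization.support, ((((Nat.factorial n)).factorization p : ℕ) : ℝ) * Real.log p := by
          apply Finset.sum_le_sum_of_subset_of_nonneg hsub
          intro p hp _
          exact mul_nonneg (by positivity) (Real.log_natCast_nonneg p)
      _ = Real.log ((Nat.factorial n)) := by
          conv_rhs => rw [← Nat.factorization_prod_pow_eq_self (Nat.factorial_ne_zero n)]
          rw [Finsupp.prod, Nat.cast_prod, Real.log_prod (fun p hp => by
            have hpp := Nat.prime_of_mem_primeFactors ((Nat.support_factorization _) ▸ hp)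
            have : (0:ℝ) < p := by exact_mod_cast hpp.pos
            push_cast
            positivity)]
          apply Finset.sum_congr rfl
          intro p hp
          push_cast
          rw [Real.log_pow]
      _ ≤ (n : ℝ) * Real.log n := by
          calc Real.log ((Nat.factorial n)) ≤ Real.log ((n : ℕ) ^ n) := by
                apply Real.log_le_log (by exact_mod_cast Nat.factorial_pos n)
                exact_mod_cast Nat.factorial_le_pow n
            _ = (n : ℝ) * Real.log n := by push_cast; rw [Real.log_pow]
  have h3 := cheby n
  linarith

private lemma log2pos : (0:ℝ) < Real.log 2 := Real.log_pos (by norm_num)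

private lemma abel (N : ℕ) (hN : 2 ≤ N) :
    ∑ p ∈ (Finset.range (N + 1)).filter Nat.Prime, (1 : ℝ) / p
      ≤ AA N / Real.log N + (Real.log (Real.log N) - Real.log (Real.log 2)) + 2
        - Real.log 4 / Real.log N := by
  induction N with
  | zero => omega
  | succ n ih =>
    rcases Nat.lt_or_ge n 2 with h | h
    · have hn1 : n = 1 := by omega
      subst hn1
      have hfilter : (Finset.range 3).filter Nat.Prime = {2} := by decide
      have hl2 : Real.log 2 ≠ 0 := ne_of_gt log2pos
      have hlog4 : Real.log 4 = 2 * Real.log 2 := by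
        rw [show (4:ℝ) = 2 ^ 2 by norm_num, Real.log_pow]; push_cast; ring
      rw [AA]
      norm_num [hfilter, hlog4]
      rw [div_right_comm, div_self hl2]
    · have hn0 : (0:ℝ) < n := by positivity
      have hn2 : (2:ℝ) ≤ n := by exact_mod_cast h
      set a := Real.log n with ha_def
      set b := Real.log ((n:ℝ) + 1) with hb_def
      have ha : Real.log 2 ≤ a := Real.log_le_log (by norm_num) hn2
      have ha0 : 0 < a := lt_of_lt_of_le log2pos ha
      have hab : a ≤ b := Real.log_le_log hn0 (by linarith)
      have hb0 : 0 < b := lt_of_lt_of_le ha0 hab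
      have hcast : ((n+1 : ℕ) : ℝ) = (n:ℝ) + 1 := by push_cast; ring
      have hS : ∑ p ∈ (Finset.range (n + 2)).filter Nat.Prime, (1 : ℝ) / p
          = ∑ p ∈ (Finset.range (n + 1)).filter Nat.Prime, (1 : ℝ) / p
            + (if (n+1).Prime then (1:ℝ)/((n+1:ℕ):ℝ) else 0) := by
        rw [Finset.sum_filter, Finset.sum_filter, Finset.sum_range_succ]
      have hA : AA (n+1) = AA n
          + (if (n+1).Prime then Real.log ((n+1:ℕ):ℝ)/((n+1:ℕ):ℝ) else 0) := by
        rw [AA, AA, Finset.sum_filter, Finset.sum_filter, Finset.sum_range_succ]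
      set t : ℝ := if (n+1).Prime then Real.log ((n+1:ℕ):ℝ)/((n+1:ℕ):ℝ) else 0 with ht_def
      have hcb : Real.log ((n+1:ℕ):ℝ) = b := by rw [hcast]
      have ht : (if (n+1).Prime then (1:ℝ)/((n+1:ℕ):ℝ) else 0) = t / b := by
        rw [ht_def]; split_ifs with hp
        · rw [hcb, div_right_comm, div_self (ne_of_gt hb0)]
        · rw [zero_div]
      have ih' := ih (by omega)
      have mert := mertens n (by omega)
      have hd : 0 ≤ 1/a - 1/b := by
        have := one_div_le_one_div_of_le ha0 hab
        linarith
      have key : (AA n - Real.log 4) * (1/a - 1/b) ≤ Real.log b - Real.log a := by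
        have h1 : (AA n - Real.log 4) * (1/a - 1/b) ≤ a * (1/a - 1/b) :=
          mul_le_mul_of_nonneg_right (by linarith) hd
        have h2 : a * (1/a - 1/b) = 1 - a/b := by
          field_simp
        have h3 : Real.log (a/b) ≤ a/b - 1 := Real.log_le_sub_one_of_pos (by positivity)
        have h4 : Real.log (a/b) = Real.log a - Real.log b :=
          Real.log_div (ne_of_gt ha0) (ne_of_gt hb0)
        linarith
      have expand : (AA n - Real.log 4) * (1/a - 1/b)
          = AA n/a - Real.log 4/a - AA n/b + Real.log 4/b := by
        field_simp; ring
      have htnn : 0 ≤ t := by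
        rw [ht_def]; split_ifs with hp
        · exact div_nonneg (Real.log_natCast_nonneg _) (by positivity)
        · exact le_refl 0
      show ∑ p ∈ (Finset.range (n + 2)).filter Nat.Prime, (1 : ℝ) / p
          ≤ AA (n+1) / Real.log ((n+1:ℕ):ℝ)
            + (Real.log (Real.log ((n+1:ℕ):ℝ)) - Real.log (Real.log 2)) + 2
            - Real.log 4 / Real.log ((n+1:ℕ):ℝ)
      rw [hS, hA, ht, hcb, add_div]
      have halog : Real.log (Real.log ((n:ℕ):ℝ)) = Real.log a := rfl
      linarith [ih']

theorem prime_recip_sum (x : ℝ) (hx : 2 ≤ x) :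
    ∑ p ∈ (Finset.range (⌊x⌋₊ + 1)).filter Nat.Prime, (1 : ℝ) / p
      ≤ Real.log (Real.log x) + 3 - Real.log (Real.log 2) := by
  set N := ⌊x⌋₊ with hNdef
  have hN : 2 ≤ N := Nat.le_floor (by exact_mod_cast hx)
  have hNx : (N : ℝ) ≤ x := Nat.floor_le (by linarith)
  have hN2 : (2:ℝ) ≤ (N:ℝ) := by exact_mod_cast hN
  have hlogN : Real.log 2 ≤ Real.log N := Real.log_le_log (by norm_num) hN2
  have hlogN0 : 0 < Real.log N := lt_of_lt_of_le log2pos hlogN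
  have h1 := abel N hN
  have mert := mertens N (by omega)
  have h2 : AA N / Real.log N ≤ 1 + Real.log 4 / Real.log N := by
    rw [div_le_iff₀ hlogN0]
    have : (1 + Real.log 4 / Real.log N) * Real.log N
        = Real.log N + Real.log 4 := by field_simp
    linarith
  have h3 : Real.log (Real.log N) ≤ Real.log (Real.log x) :=
    Real.log_le_log hlogN0 (Real.log_le_log (by linarith) hNx)
  linarith
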